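/- arXiv:1506.02369 — 4 statements merged into one kernel-verified Lean document; each statement's English description precedes it below -/
import Mathlib

section
/- If u ∼ v and a, b are dependent letters (D a b), then the projection of u onto the subalphabet {a, b} equals the projection of v onto {a, b}. -/
/-- One-step swap of adjacent independent letters. -/
def Swap {α : Type*} (D : α → α → Prop) (u v : List α) : Prop :=
  ∃ (p q : List α) (a b : α), ¬ D a b ∧ u = p ++ [a, b] ++ q ∧ v = p ++ [b, a] ++ q

/-- Trace equivalence: the equivalence closure of the swap relation. -/
def TraceEquiv {α : Type*} (D : α → α → Prop) : List α → List α → Prop :=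
  Relation.EqvGen (Swap D)

theorem traceEquiv_proj_eq {α : Type*} [Fintype α] [DecidableEq α]
    (D : α → α → Prop) (hrefl : ∀ a, D a a) (hsymm : ∀ a b, D a b → D b a)
    (u v : List α) (h : TraceEquiv D u v) (a b : α) (hab : D a b) :
    u.filter (fun c => c = a ∨ c = b) = v.filter (fun c => c = a ∨ c = b) := by
  induction h with
  | rel x y hxy =>
    obtain ⟨p, q, x1, y1, hnd, rfl, rfl⟩ := hxy
    simp only [List.filter_append]
    congr 1
    congr 1
    have key : ¬ (x1 = a ∨ x1 = b) ∨ ¬ (y1 = a ∨ y1 = b) := by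
      by_contra hc
      push_neg at hc
      obtain ⟨h1, h2⟩ := hc
      rcases h1 with rfl | rfl <;> rcases h2 with rfl | rfl <;>
        first
        | exact hnd (hrefl _)
        | exact hnd hab
        | exact hnd (hsymm _ _ hab)
    rcases key with hk | hk <;> simp [List.filter, hk]
  | refl => rfl
  | symm _ _ _ ih => exact ih.symm
  | trans _ _ _ _ _ ih1 ih2 => exact ih1.trans ih2
end

section
/- Conversely to the projection lemma (Projection Lemma of Mazurkiewicz traces): two words u, v ∈ Σ* are trace equivalent if and only if for every pair (a,b) ∈ D, the projections of u and v onto {a,b} are equal. -/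
private lemma traceEquiv_cons {α : Type*} (D : α → α → Prop) (x : α) {u v : List α}
    (h : TraceEquiv D u v) : TraceEquiv D (x :: u) (x :: v) := by
  induction h with
  | rel u v h =>
      obtain ⟨p, q, a, b, hab, hu, hv⟩ := h
      exact Relation.EqvGen.rel _ _ ⟨x :: p, q, a, b, hab, by simp [hu], by simp [hv]⟩
  | refl u => exact Relation.EqvGen.refl _
  | symm _ _ _ ih => exact Relation.EqvGen.symm _ _ ih
  | trans _ _ _ _ _ ih1 ih2 => exact Relation.EqvGen.trans _ _ _ ih1 ih2

private lemma traceEquiv_shift {α : Type*} (D : α → α → Prop) (x : α) :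
    ∀ (p s : List α), (∀ y ∈ p, ¬ D x y) → TraceEquiv D (x :: (p ++ s)) (p ++ x :: s)
  | [], s, _ => Relation.EqvGen.refl _
  | y :: p, s, h => by
      have h1 : Swap D (x :: y :: (p ++ s)) (y :: x :: (p ++ s)) :=
        ⟨[], p ++ s, x, y, h y (by simp), rfl, rfl⟩
      exact Relation.EqvGen.trans _ _ _ (Relation.EqvGen.rel _ _ h1)
        (traceEquiv_cons D y (traceEquiv_shift D x p s (fun z hz => h z (by simp [hz]))))

private lemma mem_split_first {α : Type*} [DecidableEq α] {x : α} :
    ∀ {l : List α}, x ∈ l → ∃ p s, l = p ++ x :: s ∧ x ∉ p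
  | [], h => by simp at h
  | y :: l, h => by
      by_cases hxy : x = y
      · exact ⟨[], l, by simp [hxy], by simp⟩
      · have hx : x ∈ l := by
          rcases List.mem_cons.mp h with h | h
          · exact absurd h hxy
          · exact h
        obtain ⟨p, s, hps, hnp⟩ := mem_split_first hx
        exact ⟨y :: p, s, by simp [hps], by simp [hxy, hnp]⟩

/-- Projection Lemma of Mazurkiewicz traces. -/
theorem traceEquiv_iff_projections {α : Type*} [Fintype α] [DecidableEq α]
    (D : α → α → Prop) (hrefl : ∀ a, D a a) (hsymm : ∀ a b, D a b → D b a)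
    (u v : List α) :
    TraceEquiv D u v ↔
      ∀ a b : α, D a b →
        u.filter (fun c => c = a ∨ c = b) = v.filter (fun c => c = a ∨ c = b) := by
  constructor
  · intro h
    induction h with
    | rel u v h =>
        intro a b hab
        obtain ⟨p, q, c, d, hcd, hu, hv⟩ := h
        have key : ¬ ((c = a ∨ c = b) ∧ (d = a ∨ d = b)) := by
          rintro ⟨hc | hc, hd | hd⟩ <;> subst hc <;> subst hd
          · exact hcd (hrefl _)
          · exact hcd hab
          · exact hcd (hsymm _ _ hab)
          · exact hcd (hrefl _)
        subst hu; subst hv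
        simp only [List.filter_append]
        congr 1
        congr 1
        by_cases hc : (c = a ∨ c = b)
        · by_cases hd : (d = a ∨ d = b)
          · exact absurd ⟨hc, hd⟩ key
          · simp [List.filter_cons, hc, hd]
        · by_cases hd : (d = a ∨ d = b) <;> simp [List.filter_cons, hc, hd]
    | refl u => intro a b _; rfl
    | symm _ _ _ ih => intro a b hab; exact (ih a b hab).symm
    | trans _ _ _ _ _ ih1 ih2 => intro a b hab; exact (ih1 a b hab).trans (ih2 a b hab)
  · intro h
    induction u generalizing v with
    | nil =>
        have hv : v = [] := by
          rcases v.eq_nil_or_concat with hv | _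
          · exact hv
          by_contra hne
          obtain ⟨y, l, rfl⟩ := List.exists_cons_of_ne_nil hne
          have := h y y (hrefl y)
          simp at this
        subst hv; exact Relation.EqvGen.refl _
    | cons x u ih =>
        -- x is in v
        have hxmem : x ∈ v := by
          have hxx := h x x (hrefl x)
          have : x ∈ v.filter (fun c => c = x ∨ c = x) := by
            rw [← hxx]; simp [List.filter_cons]
          exact (List.mem_filter.mp this).1
        obtain ⟨p, s, rfl, hxp⟩ := mem_split_first hxmem
        -- every letter of p is independent of x
        have hindep : ∀ y ∈ p, ¬ D x y := by
          intro y hy hDxy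
          have hyx : y ≠ x := fun hyx => hxp (hyx ▸ hy)
          have hfil := h x y hDxy
          -- lhs starts with x
          have hl : (x :: u).filter (fun c => c = x ∨ c = y) =
              x :: u.filter (fun c => c = x ∨ c = y) := by
            simp [List.filter_cons]
          -- rhs: filter p is nonempty, its head is y-flavored
          set P : α → Bool := fun c => decide (c = x ∨ c = y) with hP
          have hyP : y ∈ p.filter P := List.mem_filter.mpr ⟨hy, by simp [hP]⟩
          obtain ⟨z, t, hzt⟩ := List.exists_cons_of_ne_nil (List.ne_nil_of_mem hyP)
          have hz : z ∈ p.filter P := by rw [hzt]; simp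
          have hzp : z ∈ p := (List.mem_filter.mp hz).1
          have hzxy : z = x ∨ z = y := by
            have := (List.mem_filter.mp hz).2; simpa [hP] using this
          have hzy : z = y := by
            rcases hzxy with hz' | hz'
            · exact absurd (hz' ▸ hzp) hxp
            · exact hz'
          have hr : (p ++ x :: s).filter P = z :: (t ++ x :: s.filter P) := by
            rw [List.filter_append, hzt, List.filter_cons]
            simp [hP]
          rw [hl] at hfil
          have : x = z := by
            have := hfil.trans hr
            exact (List.cons.injEq _ _ _ _ ▸ this).1
          exact hyx (hzy ▸ this.symm)
        -- projections of u and p ++ s agree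
        have h' : ∀ a b : α, D a b →
            u.filter (fun c => c = a ∨ c = b) = (p ++ s).filter (fun c => c = a ∨ c = b) := by
          intro a b hab
          have hfil := h a b hab
          by_cases hx : (x = a ∨ x = b)
          · -- filter p is empty
            have hpnil : p.filter (fun c => decide (c = a ∨ c = b)) = [] := by
              rw [List.filter_eq_nil_iff]
              intro y hy
              simp only [decide_eq_true_eq]
              rintro (rfl | rfl) <;>
                rcases hx with rfl | rfl <;>
                first
                  | exact hxp hy
                  | exact hindep _ hy hab
                  | exact hindep _ hy (hsymm _ _ hab)
            rw [List.filter_cons, List.filter_append, List.filter_cons, hpnil,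
              List.nil_append, if_pos (by simp [hx]), if_pos (by simp [hx])] at hfil
            rw [List.filter_append, hpnil, List.nil_append]
            injection hfil
          · rw [List.filter_cons, List.filter_append, List.filter_cons,
              if_neg (by simp [hx]), if_neg (by simp [hx])] at hfil
            rw [List.filter_append]
            exact hfil
        have h1 : TraceEquiv D u (p ++ s) := ih _ h'
        have h2 : TraceEquiv D (x :: u) (x :: (p ++ s)) := traceEquiv_cons D x h1
        exact Relation.EqvGen.trans _ _ _ h2 (traceEquiv_shift D x p s hindep)
end

section
/- For a single swap of adjacent independent letters, the induced happens-before partial orders of u·a·b·v and u·b·a·v are isomorphic: the bijection on positions that exchanges the two swapped positions and is the identity elsewhere is an order isomorphism of the happens-before relations. -/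
/-- Happens-before relation of a word. -/
def HB {α : Type*} (D : α → α → Prop) (w : List α) :
    Fin w.length → Fin w.length → Prop :=
  Relation.ReflTransGen (fun i j => (i : ℕ) < (j : ℕ) ∧ D (w.get i) (w.get j))

/-- Swap indices `n` and `n+1`. -/
def swapIdx (n m : ℕ) : ℕ := if m = n then n + 1 else if m = n + 1 then n else m

lemma swapIdx_lt_len (n m L : ℕ) (hm : m < L) (hn : n + 1 < L) : swapIdx n m < L := by
  simp only [swapIdx]; split_ifs <;> omega

lemma swapIdx_mono (n i j : ℕ) (hij : i < j) (h : ¬(i = n ∧ j = n + 1)) :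
    swapIdx n i < swapIdx n j := by
  simp only [swapIdx]; split_ifs <;> omega

lemma swapIdx_invol (n m : ℕ) : swapIdx n (swapIdx n m) = m := by
  simp only [swapIdx]; split_ifs <;> omega

lemma len_eq {α : Type*} (u v : List α) (a b : α) :
    (u ++ [a, b] ++ v).length = (u ++ [b, a] ++ v).length := by simp

lemma gidx {α : Type*} (l : List α) {i j : ℕ} (h : i = j) (hj : j < l.length) :
    l[i]'(h ▸ hj) = l[j] := by subst h; rfl

lemma glist {α : Type*} {l l' : List α} (i : ℕ) (h : l = l') (hi : i < l'.length) :
    l[i]'(h ▸ hi) = l'[i] := by subst h; rfl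

lemma getn {α : Type*} (u v : List α) (x y : α)
    (h : u.length < (u ++ [x, y] ++ v).length) :
    (u ++ [x, y] ++ v)[u.length] = x := by
  rw [glist _ (List.append_assoc u [x, y] v) (by simpa using h),
    List.getElem_append_right (le_refl _)]
  simp

lemma getn1 {α : Type*} (u v : List α) (x y : α)
    (h : u.length + 1 < (u ++ [x, y] ++ v).length) :
    (u ++ [x, y] ++ v)[u.length + 1] = y := by
  rw [glist _ (List.append_assoc u [x, y] v) (by simpa using h),
    List.getElem_append_right (Nat.le_succ_of_le (le_refl _))]
  simp

lemma label_swap {α : Type*} (u v : List α) (a b : α) (m : ℕ)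
    (hm : m < (u ++ [a, b] ++ v).length)
    (hm' : swapIdx u.length m < (u ++ [b, a] ++ v).length) :
    (u ++ [b, a] ++ v)[swapIdx u.length m] = (u ++ [a, b] ++ v)[m] := by
  have hlen : (u ++ [a, b] ++ v).length = u.length + 2 + v.length := by simp; omega
  rcases lt_trichotomy m u.length with hc | hc | hc
  · have e : swapIdx u.length m = m := by simp only [swapIdx]; split_ifs <;> omega
    rw [gidx _ e (by omega)]
    rw [glist _ (List.append_assoc u [b, a] v) (by simp; omega),
      glist _ (List.append_assoc u [a, b] v) (by simp; omega),
      List.getElem_append_left hc, List.getElem_append_left hc]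
  · subst hc
    have e : swapIdx u.length u.length = u.length + 1 := by simp [swapIdx]
    rw [gidx _ e (by rw [← len_eq]; omega)]
    rw [getn1 u v b a (by rw [← len_eq]; omega), getn u v a b hm]
  · rcases Nat.lt_or_ge m (u.length + 2) with hc2 | hc2
    · have hm1 : m = u.length + 1 := by omega
      subst hm1
      have e : swapIdx u.length (u.length + 1) = u.length := by simp [swapIdx]
      rw [gidx _ e (by rw [← len_eq]; omega)]
      rw [getn u v b a (by rw [← len_eq]; omega), getn1 u v a b hm]
    · have e : swapIdx u.length m = m := by simp only [swapIdx]; split_ifs <;> omega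
      rw [gidx _ e (by rw [← len_eq]; omega)]
      rw [glist _ (List.append_assoc u [b, a] v) (by simp at hm ⊢; omega),
        glist _ (List.append_assoc u [a, b] v) (by simp at hm ⊢; omega),
        List.getElem_append_right (by omega : u.length ≤ m),
        List.getElem_append_right (by omega : u.length ≤ m)]
      obtain ⟨t, ht⟩ : ∃ t, m - u.length = t + 2 := ⟨m - u.length - 2, by omega⟩
      simp [ht]

lemma hb_swap_aux {α : Type*} (D : α → α → Prop) (u v : List α) (a b : α)
    (hab : ¬ D a b) {i j : Fin (u ++ [a, b] ++ v).length}
    (h : HB D (u ++ [a, b] ++ v) i j) :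
    ∀ (i' j' : Fin (u ++ [b, a] ++ v).length),
      (i' : ℕ) = swapIdx u.length i → (j' : ℕ) = swapIdx u.length j →
      HB D (u ++ [b, a] ++ v) i' j' := by
  have hn1 : u.length + 1 < (u ++ [a, b] ++ v).length := by
    simp only [List.length_append, List.length_cons, List.length_nil]; omega
  induction h with
  | refl =>
    intro i' j' hi hj
    have : i' = j' := Fin.ext (by omega)
    rw [this]
    exact Relation.ReflTransGen.refl
  | @tail k j hik hstep ih =>
    intro i' j' hi hj
    obtain ⟨hklt, hD⟩ := hstep
    have hkb : swapIdx u.length (k : ℕ) < (u ++ [b, a] ++ v).length := by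
      refine swapIdx_lt_len _ _ _ ?_ ?_
      · exact lt_of_lt_of_eq k.isLt (len_eq u v a b)
      · exact lt_of_lt_of_eq hn1 (len_eq u v a b)
    refine Relation.ReflTransGen.tail (ih i' ⟨_, hkb⟩ hi rfl) ?_
    have hne : ¬((k : ℕ) = u.length ∧ (j : ℕ) = u.length + 1) := by
      rintro ⟨h1, h2⟩
      apply hab
      have e1 : (u ++ [a, b] ++ v).get k = a := by
        rw [List.get_eq_getElem, gidx _ h1 (by omega)]
        exact getn u v a b (by omega)
      have e2 : (u ++ [a, b] ++ v).get j = b := by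
        rw [List.get_eq_getElem, gidx _ h2 (by omega)]
        exact getn1 u v a b (by omega)
      rwa [e1, e2] at hD
    refine ⟨?_, ?_⟩
    · rw [hj]; exact swapIdx_mono _ _ _ hklt hne
    · have hjb : swapIdx u.length (j : ℕ) < (u ++ [b, a] ++ v).length := by
        rw [← hj]; exact j'.isLt
      have l1 := label_swap u v a b (k : ℕ) k.isLt hkb
      have l2 := label_swap u v a b (j : ℕ) j.isLt hjb
      have hj' : j' = ⟨swapIdx u.length (j : ℕ), hjb⟩ := Fin.ext hj
      rw [hj']
      show D ((u ++ [b, a] ++ v)[swapIdx u.length (k : ℕ)]'hkb)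
        ((u ++ [b, a] ++ v)[swapIdx u.length (j : ℕ)]'hjb)
      rw [l1, l2]
      exact hD

theorem swap_hb_orderIso {α : Type*} [Fintype α] (D : α → α → Prop)
    (hrefl : ∀ a, D a a) (hsymm : ∀ a b, D a b → D b a)
    (u v : List α) (a b : α) (hab : ¬ D a b) :
    ∃ φ : Fin (u ++ [a, b] ++ v).length ≃ Fin (u ++ [b, a] ++ v).length,
      (∀ i : Fin (u ++ [a, b] ++ v).length,
        ((φ i : ℕ) = if (i : ℕ) = u.length then u.length + 1
          else if (i : ℕ) = u.length + 1 then u.length else (i : ℕ))) ∧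
      (∀ i, (u ++ [b, a] ++ v).get (φ i) = (u ++ [a, b] ++ v).get i) ∧
      (∀ i j, HB D (u ++ [a, b] ++ v) i j ↔ HB D (u ++ [b, a] ++ v) (φ i) (φ j)) := by
  have hlen := len_eq u v a b
  have hn1 : u.length + 1 < (u ++ [a, b] ++ v).length := by
    simp only [List.length_append, List.length_cons, List.length_nil]; omega
  have hn1' : u.length + 1 < (u ++ [b, a] ++ v).length := lt_of_lt_of_eq hn1 hlen
  have hba : ¬ D b a := fun h => hab (hsymm _ _ h)
  refine ⟨⟨fun i => ⟨swapIdx u.length i, swapIdx_lt_len _ _ _ (lt_of_lt_of_eq i.isLt hlen) hn1'⟩,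
    fun i => ⟨swapIdx u.length i, swapIdx_lt_len _ _ _ (lt_of_lt_of_eq i.isLt hlen.symm) hn1⟩,
    fun i => Fin.ext (swapIdx_invol _ _), fun i => Fin.ext (swapIdx_invol _ _)⟩,
    fun i => rfl, ?_, ?_⟩
  · intro i
    simp only [Equiv.coe_fn_mk, List.get_eq_getElem]
    exact label_swap u v a b (i : ℕ) i.isLt _
  · intro i j
    constructor
    · intro h
      exact hb_swap_aux D u v a b hab h _ _ rfl rfl
    · intro h
      have := hb_swap_aux D u v b a hba h
        ⟨(i : ℕ), i.isLt⟩ ⟨(j : ℕ), j.isLt⟩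
        (by simp [swapIdx_invol]) (by simp [swapIdx_invol])
      convert this <;> exact Fin.ext rfl
end

section
/- Taking the trace (happens-before labelled partial order) of a word is invariant under trace equivalence: if u ∼ v then there is a label-preserving order isomorphism between the happens-before partial orders of u and v. -/
private lemma rtg_equiv {β γ : Type*} (e : β ≃ γ) {r : β → β → Prop} {s : γ → γ → Prop}
    (h : ∀ i j, r i j ↔ s (e i) (e j)) (i j : β) :
    Relation.ReflTransGen r i j ↔ Relation.ReflTransGen s (e i) (e j) := by
  constructor
  · intro hh
    induction hh with
    | refl => exact .refl
    | tail _ hbc ih => exact ih.tail ((h _ _).mp hbc)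
  · intro hh
    have key : ∀ x y, Relation.ReflTransGen s x y →
        Relation.ReflTransGen r (e.symm x) (e.symm y) := by
      intro x y hxy
      induction hxy with
      | refl => exact .refl
      | tail _ hbc ih => exact ih.tail ((h _ _).mpr (by simpa using hbc))
    simpa using key _ _ hh

private lemma swap_iso {α : Type*} (D : α → α → Prop)
    (hsymm : ∀ a b, D a b → D b a) {u v : List α} (hs : Swap D u v) :
    ∃ φ : Fin u.length ≃ Fin v.length,
      (∀ i, v.get (φ i) = u.get i) ∧
      (∀ i j, HB D u i j ↔ HB D v (φ i) (φ j)) := by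
  obtain ⟨p, q, a, b, hab, hu, hv⟩ := hs
  subst hu hv
  set n := p.length with hn
  have hlu : (p ++ [a, b] ++ q).length = n + 2 + q.length := by simp [hn]; omega
  have hlv : (p ++ [b, a] ++ q).length = n + 2 + q.length := by simp [hn]; omega
  set σ : ℕ → ℕ := fun k => if k = n then n + 1 else if k = n + 1 then n else k with hσ
  have hσlt : ∀ k, k < n + 2 + q.length → σ k < n + 2 + q.length := by
    intro k hk; simp only [hσ]; split_ifs <;> omega
  have hσσ : ∀ k, σ (σ k) = k := by
    intro k; simp only [hσ]; split_ifs <;> omega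
  have hlabel : ∀ k (hk1 : k < (p++[a,b]++q).length) (hk2 : σ k < (p++[b,a]++q).length),
      (p++[b,a]++q)[σ k] = (p++[a,b]++q)[k] := by
    intro k hk1 hk2
    have hk1' : k < n + 2 + q.length := by omega
    have hcases : k < n ∨ k = n ∨ k = n + 1 ∨ ∃ m, k = n + 2 + m := by
      rcases Nat.lt_or_ge k n with h | h
      · exact .inl h
      · rcases Nat.lt_or_ge k (n+1) with h' | h'
        · exact .inr (.inl (by omega))
        · rcases Nat.lt_or_ge k (n+2) with h'' | h''
          · exact .inr (.inr (.inl (by omega)))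
          · exact .inr (.inr (.inr ⟨k - (n+2), by omega⟩))
    rcases hcases with h1 | h1 | h1 | ⟨m, h1⟩
    · have h2 : σ k = k := by simp only [hσ]; split_ifs <;> omega
      simp only [h2]
      rw [List.getElem_append_left (by simp only [List.length_append, List.length_cons, List.length_nil]; omega : k < (p++[b,a]).length),
          List.getElem_append_left (by simp only [List.length_append, List.length_cons, List.length_nil]; omega : k < (p++[a,b]).length),
          List.getElem_append_left (h1 : k < p.length),
          List.getElem_append_left (h1 : k < p.length)]
    · have h2 : σ k = n + 1 := by simp only [hσ]; split_ifs <;> omega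
      simp only [h2]; simp only [h1]
      rw [List.getElem_append_left (by simp only [List.length_append, List.length_cons, List.length_nil]; omega : n+1 < (p++[b,a]).length),
          List.getElem_append_left (by simp only [List.length_append, List.length_cons, List.length_nil]; omega : n < (p++[a,b]).length),
          List.getElem_append_right (by omega : p.length ≤ n+1),
          List.getElem_append_right (by omega : p.length ≤ n)]
      have e1 : n + 1 - p.length = 1 := by omega
      have e2 : n - p.length = 0 := by omega
      simp [e1, e2]
    · have h2 : σ k = n := by simp only [hσ]; split_ifs <;> omega
      simp only [h2]; simp only [h1]
      rw [List.getElem_append_left (by simp only [List.length_append, List.length_cons, List.length_nil]; omega : n < (p++[b,a]).length),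
          List.getElem_append_left (by simp only [List.length_append, List.length_cons, List.length_nil]; omega : n+1 < (p++[a,b]).length),
          List.getElem_append_right (by omega : p.length ≤ n+1),
          List.getElem_append_right (by omega : p.length ≤ n)]
      have e1 : n + 1 - p.length = 1 := by omega
      have e2 : n - p.length = 0 := by omega
      simp [e1, e2]
    · have h2 : σ k = k := by simp only [hσ]; split_ifs <;> omega
      simp only [h2]; simp only [h1]
      rw [List.getElem_append_right (by simp only [List.length_append, List.length_cons, List.length_nil]; omega : (p++[b,a]).length ≤ n+2+m),
          List.getElem_append_right (by simp only [List.length_append, List.length_cons, List.length_nil]; omega : (p++[a,b]).length ≤ n+2+m)]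
      congr 1 <;> simp <;> omega
  have hua : ∀ k (h : k < (p++[a,b]++q).length), k = n → (p++[a,b]++q)[k] = a := by
    intro k h hk
    rw [List.getElem_append_left (by simp only [List.length_append, List.length_cons, List.length_nil]; omega : k < (p++[a,b]).length),
        List.getElem_append_right (by omega : p.length ≤ k)]
    simp [show k - p.length = 0 by omega]
  have hub : ∀ k (h : k < (p++[a,b]++q).length), k = n + 1 → (p++[a,b]++q)[k] = b := by
    intro k h hk
    rw [List.getElem_append_left (by simp only [List.length_append, List.length_cons, List.length_nil]; omega : k < (p++[a,b]).length),
        List.getElem_append_right (by omega : p.length ≤ k)]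
    simp [show k - p.length = 1 by omega]
  refine ⟨⟨fun i => ⟨σ i, by rw [hlv]; exact hσlt i (hlu ▸ i.2)⟩,
          fun i => ⟨σ i, by rw [hlu]; exact hσlt i (hlv ▸ i.2)⟩,
          fun i => by ext; simp [hσσ], fun i => by ext; simp [hσσ]⟩, ?_, ?_⟩
  · intro i
    exact hlabel i.val i.2 _
  · intro i j
    refine rtg_equiv _ ?_ i j
    intro x y
    have hx := hlabel x.val x.2 (by rw [hlv]; exact hσlt x (hlu ▸ x.2))
    have hy := hlabel y.val y.2 (by rw [hlv]; exact hσlt y (hlu ▸ y.2))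
    simp only [List.get_eq_getElem, Equiv.coe_fn_mk]
    rw [hx, hy]
    constructor
    · rintro ⟨hxy, hD⟩
      refine ⟨?_, hD⟩
      have h1 : x.val ≠ n ∨ y.val ≠ n + 1 := by
        by_contra hc
        push_neg at hc
        have hD' := hD
        rw [hua _ x.2 hc.1, hub _ y.2 hc.2] at hD'
        exact hab hD'
      show σ x.val < σ y.val
      simp only [hσ]
      rcases h1 with h1 | h1 <;> split_ifs <;> omega
    · rintro ⟨hxy, hD⟩
      refine ⟨?_, hD⟩
      have hxy' : σ x.val < σ y.val := hxy
      have h1 : x.val ≠ n + 1 ∨ y.val ≠ n := by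
        by_contra hc
        push_neg at hc
        have hD' := hD
        rw [hub _ x.2 hc.1, hua _ y.2 hc.2] at hD'
        exact hab (hsymm _ _ hD')
      simp only [hσ] at hxy'
      rcases h1 with h1 | h1 <;> (revert hxy'; split_ifs <;> omega)

/-- Trace-equivalent words have label-preserving isomorphic happens-before
partial orders. -/
theorem traceEquiv_hb_iso {α : Type*} [Fintype α] (D : α → α → Prop)
    (hrefl : ∀ a, D a a) (hsymm : ∀ a b, D a b → D b a)
    (u v : List α) (h : TraceEquiv D u v) :
    ∃ φ : Fin u.length ≃ Fin v.length,
      (∀ i, v.get (φ i) = u.get i) ∧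
      (∀ i j, HB D u i j ↔ HB D v (φ i) (φ j)) := by
  induction h with
  | rel x y hs => exact swap_iso D hsymm hs
  | refl x => exact ⟨Equiv.refl _, fun i => rfl, fun i j => Iff.rfl⟩
  | symm x y _ ih =>
    obtain ⟨φ, h1, h2⟩ := ih
    refine ⟨φ.symm, fun i => ?_, fun i j => ?_⟩
    · have := h1 (φ.symm i); simpa using this.symm
    · simpa using (h2 (φ.symm i) (φ.symm j)).symm
  | trans x y z _ _ ih1 ih2 =>
    obtain ⟨φ1, h1, h2⟩ := ih1
    obtain ⟨φ2, h3, h4⟩ := ih2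
    exact ⟨φ1.trans φ2, fun i => by rw [Equiv.trans_apply, h3, h1],
      fun i j => (h2 i j).trans (h4 (φ1 i) (φ1 j))⟩
end
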